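/- In a finite DAG, the maximum cardinality of a basis equals the number of sources: there exists a basis whose cardinality equals the number of sources, and every basis has cardinality at most the number of sources. -/
import Mathlib


/-- Two vertices are dependent if they share a common ancestor
(ancestorship via the reflexive-transitive closure of the edge relation). -/
def Dep {V : Type*} (E : V → V → Prop) (x y : V) : Prop :=
  ∃ a, Relation.ReflTransGen E a x ∧ Relation.ReflTransGen E a y

/-- A basis: a set of pairwise independent vertices such that every vertex
outside the set is dependent on some vertex of the set. -/
def IsBasis {V : Type*} (E : V → V → Prop) (B : Set V) : Prop :=
  (∀ x ∈ B, ∀ y ∈ B, x ≠ y → ¬ Dep E x y) ∧ ∀ x ∉ B, ∃ b ∈ B, Dep E x b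

lemma source_ancestor_eq {V : Type*} {E : V → V → Prop} {s a : V}
    (hs : ∀ A, ¬ E A s) (h : Relation.ReflTransGen E a s) : a = s := by
  rcases h.cases_tail with h | ⟨c, _, hc⟩
  · exact h.symm
  · exact absurd hc (hs c)

lemma exists_source_ancestor {V : Type*} [Fintype V] (E : V → V → Prop)
    (hdag : Irreflexive (Relation.TransGen E)) (x : V) :
    ∃ s, (∀ A, ¬ E A s) ∧ Relation.ReflTransGen E s x := by
  have hwf : WellFounded E := by
    haveI : IsIrrefl V (Relation.TransGen E) := ⟨hdag⟩
    have h : WellFounded (Relation.TransGen E) :=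
      Finite.wellFounded_of_trans_of_irrefl _
    exact Subrelation.wf (fun h => Relation.TransGen.single h) h
  induction x using hwf.induction with
  | _ x ih =>
    by_cases hx : ∀ A, ¬ E A x
    · exact ⟨x, hx, .refl⟩
    · push_neg at hx
      obtain ⟨a, ha⟩ := hx
      obtain ⟨s, hs, hsa⟩ := ih a ha
      exact ⟨s, hs, hsa.tail ha⟩

/-- In a finite DAG, the maximum cardinality of a basis equals the number of
sources: some basis attains the number of sources, and every basis is bounded
above by it. -/
theorem max_basis_card_eq_sources {V : Type*} [Fintype V] (E : V → V → Prop)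
    (hdag : Irreflexive (Relation.TransGen E)) :
    (∃ B : Set V, IsBasis E B ∧ B.ncard = {S : V | ∀ A, ¬ E A S}.ncard) ∧
    (∀ B : Set V, IsBasis E B → B.ncard ≤ {S : V | ∀ A, ¬ E A S}.ncard) := by
  classical
  constructor
  · refine ⟨{S : V | ∀ A, ¬ E A S}, ⟨?_, ?_⟩, rfl⟩
    · rintro x hx y hy hxy ⟨a, hax, hay⟩
      exact hxy ((source_ancestor_eq hx hax).symm.trans (source_ancestor_eq hy hay))
    · intro x hx
      obtain ⟨s, hs, hsx⟩ := exists_source_ancestor E hdag x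
      exact ⟨s, hs, s, hsx, .refl⟩
  · intro B hB
    set f : V → V := fun b => (exists_source_ancestor E hdag b).choose with hf
    have hspec : ∀ b, (∀ A, ¬ E A (f b)) ∧ Relation.ReflTransGen E (f b) b :=
      fun b => (exists_source_ancestor E hdag b).choose_spec
    apply Set.ncard_le_ncard_of_injOn f
    · intro b _
      exact (hspec b).1
    · intro b hb b' hb' hbb'
      by_contra hne
      exact hB.1 b hb b' hb' hne ⟨f b, (hspec b).2, hbb' ▸ (hspec b').2⟩
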